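/- Let j ∈ ℕ, ν₀ ∈ ℕ with ν₀ ≤ j, and let ℰ be the family of all sequences ε = (ε_k)_{k ∈ 𝒦_j} with ε_k ∈ {−1,0,1} such that for every dyadic cube Q_{−ν₀,m} ⊆ Q_{−j,0} there is exactly one k ∈ 𝒦_j with Q_{0,k} ⊆ Q_{−ν₀,m} and ε_k ≠ 0. Then: (a) the cardinality |{ε ∈ ℰ : ε_k ≠ 0}| is the same number α₀ for every k ∈ 𝒦_j, and |ℰ| = α₀ · 2^{ν₀ d}; (b) for every λ ∈ ℂ^{𝒦_j} and every k ∈ 𝒦_j one has ∑_{ε ∈ ℰ} (∑_{i ∈ 𝒦_j} ε_i λ_i) ε_k = α₀ λ_k; in particular the identity on ℂ^{𝒦_j} equals (2^{ν₀ d}/|ℰ|) ∑_{ε ∈ ℰ} ε ⊗ ε, where (ε ⊗ ε)(λ) = (∑_i ε_i λ_i) ε. -/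

import Mathlib

/-- The index set `𝒦_j = {k ∈ ℤ^d : Q_{0,k} ⊆ Q_{-j,0}}`, identified with
`(Fin d → Fin (2^j))` (the unit cubes inside the cube `[0, 2^j)^d`). -/
abbrev MorreyIdx (d j : ℕ) := Fin d → Fin (2 ^ j)

/-- `Q_{0,k} ⊆ Q_{-ν,m}` for a dyadic cube `Q_{-ν,m} ⊆ Q_{-j,0}` of side length `2^ν`,
where the cube is encoded by `m : Fin d → Fin (2^(j-ν))`: the condition is
`k i / 2^ν = m i` for all `i`. -/
def memSubcube {d j : ℕ} (ν : ℕ) (m : Fin d → ℕ) (k : MorreyIdx d j) : Prop :=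
  ∀ i, (k i : ℕ) / 2 ^ ν = m i

instance {d j : ℕ} (ν : ℕ) (m : Fin d → ℕ) (k : MorreyIdx d j) :
    Decidable (memSubcube ν m k) := by unfold memSubcube; infer_instance

/-- The norm of the finite-dimensional Morrey sequence space `m^{2^{jd}}_{u,p}`:
`‖λ‖ = max_{ν ≤ j, Q_{-ν,m} ⊆ Q_{-j,0}} |Q_{-ν,m}|^{1/u - 1/p}
   (∑_{k : Q_{0,k} ⊆ Q_{-ν,m}} |λ_k|^p)^{1/p}`, with `|Q_{-ν,m}| = 2^{νd}`. -/
noncomputable def morreyNorm (d j : ℕ) (u p : ℝ) (lam : MorreyIdx d j → ℂ) : ℝ :=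
  ⨆ ν : Fin (j + 1), ⨆ m : Fin d → Fin (2 ^ (j - (ν : ℕ))),
    (2 : ℝ) ^ ((((ν : ℕ) * d : ℕ) : ℝ) * (1 / u - 1 / p)) *
      (∑ k : MorreyIdx d j,
        if memSubcube (ν : ℕ) (fun i => (m i : ℕ)) k then ‖lam k‖ ^ p else 0) ^ (1 / p)

/-- The sup-norm on `ℂ^{𝒦_j}`, i.e. the norm of `ℓ∞^{2^{jd}}`. -/
noncomputable def supNorm (d j : ℕ) (lam : MorreyIdx d j → ℂ) : ℝ :=
  ⨆ k : MorreyIdx d j, ‖lam k‖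

/-- The operator norm of the identity map `(ℂ^{𝒦_j}, N₁) → (ℂ^{𝒦_j}, N₂)`. -/
noncomputable def idNorm (d j : ℕ) (N₁ N₂ : (MorreyIdx d j → ℂ) → ℝ) : ℝ :=
  sInf {C : ℝ | 0 ≤ C ∧ ∀ lam : MorreyIdx d j → ℂ, N₂ lam ≤ C * N₁ lam}

/-- The family `ℰ`: sequences `ε` with `ε_k ∈ {-1,0,1}` such that for every dyadic cube
`Q_{-ν₀,m} ⊆ Q_{-j,0}` (encoded by `m : Fin d → Fin (2^(j-ν₀))`) there is exactly one
`k ∈ 𝒦_j` with `Q_{0,k} ⊆ Q_{-ν₀,m}` and `ε_k ≠ 0`. -/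
def memE (d j ν₀ : ℕ) (ε : MorreyIdx d j → ℂ) : Prop :=
  (∀ k, ε k = -1 ∨ ε k = 0 ∨ ε k = 1) ∧
  ∀ m : Fin d → Fin (2 ^ (j - ν₀)), ∃! k : MorreyIdx d j,
    memSubcube ν₀ (fun i => (m i : ℕ)) k ∧ ε k ≠ 0

namespace Stmt17

abbrev Blk (d j ν₀ : ℕ) := Fin d → Fin (2 ^ (j - ν₀))
abbrev Pos (d ν₀ : ℕ) := Fin d → Fin (2 ^ ν₀)
abbrev Cfg (d j ν₀ : ℕ) := Blk d j ν₀ → Pos d ν₀ × Bool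

variable {d j ν₀ : ℕ}

lemma pow_split (hle : ν₀ ≤ j) : 2 ^ (j - ν₀) * 2 ^ ν₀ = 2 ^ j := by
  rw [← pow_add, Nat.sub_add_cancel hle]

def qmap (hle : ν₀ ≤ j) (k : MorreyIdx d j) : Blk d j ν₀ := fun i =>
  ⟨(k i : ℕ) / 2 ^ ν₀, by
    rw [Nat.div_lt_iff_lt_mul (Nat.two_pow_pos ν₀), pow_split hle]
    exact (k i).isLt⟩

def rmap (ν₀ : ℕ) {d j : ℕ} (k : MorreyIdx d j) : Pos d ν₀ := fun i =>
  ⟨(k i : ℕ) % 2 ^ ν₀, Nat.mod_lt _ (Nat.two_pow_pos ν₀)⟩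

def cmb (hle : ν₀ ≤ j) (m : Blk d j ν₀) (a : Pos d ν₀) : MorreyIdx d j := fun i =>
  ⟨(m i : ℕ) * 2 ^ ν₀ + (a i : ℕ), by
    calc (m i : ℕ) * 2 ^ ν₀ + (a i : ℕ) < ((m i : ℕ) + 1) * 2 ^ ν₀ := by
          rw [add_mul, one_mul]; exact Nat.add_lt_add_left (a i).isLt _
      _ ≤ 2 ^ (j - ν₀) * 2 ^ ν₀ := Nat.mul_le_mul_right _ (m i).isLt
      _ = 2 ^ j := pow_split hle⟩

lemma qmap_cmb (hle : ν₀ ≤ j) (m : Blk d j ν₀) (a : Pos d ν₀) :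
    qmap hle (cmb hle m a) = m := by
  funext i
  apply Fin.ext
  show ((m i : ℕ) * 2 ^ ν₀ + (a i : ℕ)) / 2 ^ ν₀ = m i
  rw [mul_comm, Nat.mul_add_div (Nat.two_pow_pos ν₀), Nat.div_eq_of_lt (a i).isLt, add_zero]

lemma rmap_cmb (hle : ν₀ ≤ j) (m : Blk d j ν₀) (a : Pos d ν₀) :
    rmap ν₀ (cmb hle m a) = a := by
  funext i
  apply Fin.ext
  show ((m i : ℕ) * 2 ^ ν₀ + (a i : ℕ)) % 2 ^ ν₀ = a i
  rw [mul_comm, Nat.mul_add_mod, Nat.mod_eq_of_lt (a i).isLt]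

lemma cmb_qmap_rmap (hle : ν₀ ≤ j) (k : MorreyIdx d j) :
    cmb hle (qmap hle k) (rmap ν₀ k) = k := by
  funext i
  apply Fin.ext
  exact Nat.div_add_mod' _ _

lemma eq_of_qr (hle : ν₀ ≤ j) {k k' : MorreyIdx d j}
    (hq : qmap hle k = qmap hle k') (hr : rmap ν₀ k = rmap ν₀ k') : k = k' := by
  rw [← cmb_qmap_rmap hle k, ← cmb_qmap_rmap hle k', hq, hr]

lemma memSubcube_iff (hle : ν₀ ≤ j) (m : Blk d j ν₀) (k : MorreyIdx d j) :
    memSubcube ν₀ (fun i => (m i : ℕ)) k ↔ qmap hle k = m :=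
  ⟨fun h => funext fun i => Fin.ext (h i),
   fun h i => congrArg Fin.val (congrFun h i)⟩

def sgn (b : Bool) : ℂ := if b then 1 else -1

lemma sgn_ne_zero (b : Bool) : sgn b ≠ 0 := by cases b <;> simp [sgn]

lemma sgn_mul_self (b : Bool) : sgn b * sgn b = 1 := by cases b <;> simp [sgn]

lemma sgn_not (b : Bool) : sgn (!b) = -sgn b := by cases b <;> simp [sgn]

lemma sgn_inj {b b' : Bool} (h : sgn b = sgn b') : b = b' := by
  cases b <;> cases b' <;> simp_all [sgn]
  · exact absurd h (by norm_num)
  · exact absurd h (by norm_num)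

def Fmap (hle : ν₀ ≤ j) (c : Cfg d j ν₀) : MorreyIdx d j → ℂ := fun k =>
  if rmap ν₀ k = (c (qmap hle k)).1 then sgn (c (qmap hle k)).2 else 0

lemma Fmap_cmb (hle : ν₀ ≤ j) (c : Cfg d j ν₀) (m : Blk d j ν₀) (a : Pos d ν₀) :
    Fmap hle c (cmb hle m a) = if a = (c m).1 then sgn (c m).2 else 0 := by
  simp [Fmap, qmap_cmb, rmap_cmb]

lemma Fmap_inj (hle : ν₀ ≤ j) : Function.Injective (Fmap (d := d) hle) := by
  intro c c' h
  funext m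
  have hk := congrFun h (cmb hle m (c m).1)
  rw [Fmap_cmb, Fmap_cmb, if_pos rfl] at hk
  by_cases hh : (c m).1 = (c' m).1
  · rw [if_pos hh] at hk
    exact Prod.ext hh (sgn_inj hk)
  · rw [if_neg hh] at hk
    exact absurd hk (sgn_ne_zero _)

lemma range_Fmap (hle : ν₀ ≤ j) :
    {ε : MorreyIdx d j → ℂ | memE d j ν₀ ε} = Set.range (Fmap hle) := by
  ext ε
  constructor
  · rintro ⟨hval, huniq⟩
    choose f h1 hu using huniq
    have hmem := fun m => (h1 m).1
    have hne := fun m => (h1 m).2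
    classical
    refine ⟨fun m => (rmap ν₀ (f m), decide (ε (f m) = 1)), ?_⟩
    funext k
    have hqf : qmap hle (f (qmap hle k)) = qmap hle k :=
      (memSubcube_iff hle _ _).mp (hmem _)
    by_cases hk : k = f (qmap hle k)
    · have hF : Fmap hle (fun m => (rmap ν₀ (f m), decide (ε (f m) = 1))) k
          = sgn (decide (ε k = 1)) := by
        simp only [Fmap]
        rw [← hk, if_pos rfl]
      rw [hF]
      rcases hval k with h1 | h1 | h1
      · rw [h1, decide_eq_false (show ¬((-1:ℂ) = 1) by norm_num)]
        simp [sgn]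
      · refine absurd h1 ?_
        rw [hk]
        exact hne _
      · rw [decide_eq_true h1, h1]
        simp [sgn]
    · have hε : ε k = 0 := by
        by_contra hne0
        exact hk (hu (qmap hle k) k ⟨(memSubcube_iff hle _ _).mpr rfl, hne0⟩)
      have hF : Fmap hle (fun m => (rmap ν₀ (f m), decide (ε (f m) = 1))) k = 0 := by
        simp only [Fmap]
        rw [if_neg]
        intro hr
        exact hk (eq_of_qr hle hqf.symm hr)
      rw [hF, hε]
  · rintro ⟨c, rfl⟩
    constructor
    · intro k
      simp only [Fmap]
      split_ifs
      · cases (c (qmap hle k)).2 <;> simp [sgn]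
      · simp
    · intro m
      refine ⟨cmb hle m (c m).1, ⟨?_, ?_⟩, ?_⟩
      · exact (memSubcube_iff hle m _).mpr (qmap_cmb hle m _)
      · rw [Fmap_cmb, if_pos rfl]; exact sgn_ne_zero _
      · rintro k' ⟨hmem', hne'⟩
        have hq' : qmap hle k' = m := (memSubcube_iff hle m k').mp hmem'
        have hr' : rmap ν₀ k' = (c m).1 := by
          by_contra hr
          apply hne'
          simp only [Fmap, hq']
          rw [if_neg hr]
        apply eq_of_qr hle
        · rw [hq', qmap_cmb]
        · rw [hr', rmap_cmb]

def alpha0 (d j ν₀ : ℕ) : ℕ := 2 * (2 ^ (ν₀ * d) * 2) ^ (2 ^ ((j - ν₀) * d) - 1)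

lemma card_Blk : Fintype.card (Blk d j ν₀) = 2 ^ ((j - ν₀) * d) := by
  rw [Fintype.card_fun, Fintype.card_fin, Fintype.card_fin, pow_mul]

lemma card_Pos : Fintype.card (Pos d ν₀) = 2 ^ (ν₀ * d) := by
  rw [Fintype.card_fun, Fintype.card_fin, Fintype.card_fin, pow_mul]

def splitEquiv (m₀ : Blk d j ν₀) (a₀ : Pos d ν₀) :
    {c : Cfg d j ν₀ // (c m₀).1 = a₀} ≃
      Bool × ({m : Blk d j ν₀ // m ≠ m₀} → Pos d ν₀ × Bool) where
  toFun c := ((c.1 m₀).2, fun m => c.1 m.1)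
  invFun p := ⟨fun m => if h : m = m₀ then (a₀, p.1) else p.2 ⟨m, h⟩, by simp⟩
  left_inv c := by
    apply Subtype.ext
    funext m
    by_cases h : m = m₀
    · subst h
      simp only [dif_pos]
      exact Prod.ext c.2.symm rfl
    · simp only [dif_neg h]
  right_inv p := by
    refine Prod.ext ?_ ?_
    · simp
    · funext m
      simp only [dif_neg m.2]

lemma card_ne (m₀ : Blk d j ν₀) :
    Fintype.card {m : Blk d j ν₀ // m ≠ m₀} = 2 ^ ((j - ν₀) * d) - 1 := by
  rw [← card_Blk (d := d) (j := j) (ν₀ := ν₀)]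
  simp [Fintype.card_subtype_compl]

lemma card_constraint (m₀ : Blk d j ν₀) (a₀ : Pos d ν₀) :
    Fintype.card {c : Cfg d j ν₀ // (c m₀).1 = a₀} = alpha0 d j ν₀ := by
  rw [Fintype.card_congr (splitEquiv m₀ a₀), Fintype.card_prod, Fintype.card_bool,
    Fintype.card_fun, Fintype.card_prod, Fintype.card_bool, card_Pos, card_ne, alpha0]

lemma card_Cfg : Fintype.card (Cfg d j ν₀) = (2 ^ (ν₀ * d) * 2) ^ (2 ^ ((j - ν₀) * d)) := by
  rw [Fintype.card_fun, Fintype.card_prod, Fintype.card_bool, card_Pos, card_Blk]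

lemma alpha0_mul : alpha0 d j ν₀ * 2 ^ (ν₀ * d) = (2 ^ (ν₀ * d) * 2) ^ (2 ^ ((j - ν₀) * d)) := by
  have hB : 1 ≤ 2 ^ ((j - ν₀) * d) := Nat.one_le_two_pow
  rw [alpha0]
  conv_rhs => rw [← Nat.sub_add_cancel hB, pow_succ]
  ring

lemma ncard_memE (hle : ν₀ ≤ j) :
    Set.ncard {ε : MorreyIdx d j → ℂ | memE d j ν₀ ε}
      = alpha0 d j ν₀ * 2 ^ (ν₀ * d) := by
  rw [range_Fmap hle, ← Nat.card_coe_set_eq, Nat.card_range_of_injective (Fmap_inj hle),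
    Nat.card_eq_fintype_card, card_Cfg, alpha0_mul]

lemma setE_eq (hle : ν₀ ≤ j) (k : MorreyIdx d j) :
    {ε : MorreyIdx d j → ℂ | memE d j ν₀ ε ∧ ε k ≠ 0}
      = Fmap hle '' {c : Cfg d j ν₀ | (c (qmap hle k)).1 = rmap ν₀ k} := by
  ext ε
  constructor
  · rintro ⟨hmem, hne⟩
    have : ε ∈ Set.range (Fmap hle) := by rw [← range_Fmap hle]; exact hmem
    obtain ⟨c, rfl⟩ := this
    refine ⟨c, ?_, rfl⟩
    by_contra hcon
    apply hne
    simp only [Fmap]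
    rw [if_neg fun h => hcon h.symm]
  · rintro ⟨c, hc, rfl⟩
    constructor
    · have : Fmap hle c ∈ Set.range (Fmap hle) := ⟨c, rfl⟩
      rw [← range_Fmap hle] at this
      exact this
    · simp only [Fmap]
      rw [if_pos hc.symm]
      exact sgn_ne_zero _

lemma ncard_ne_zero (hle : ν₀ ≤ j) (k : MorreyIdx d j) :
    Set.ncard {ε : MorreyIdx d j → ℂ | memE d j ν₀ ε ∧ ε k ≠ 0} = alpha0 d j ν₀ := by
  rw [setE_eq hle k, Set.ncard_image_of_injective _ (Fmap_inj hle),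
    ← Nat.card_coe_set_eq, Nat.card_eq_fintype_card]
  exact card_constraint _ _


lemma key_sum (hle : ν₀ ≤ j) (i k : MorreyIdx d j) :
    (∑ c : Cfg d j ν₀, Fmap hle c i * Fmap hle c k)
      = if i = k then (alpha0 d j ν₀ : ℂ) else 0 := by
  classical
  by_cases hik : i = k
  · subst hik
    rw [if_pos rfl]
    have hterm : ∀ c : Cfg d j ν₀, Fmap hle c i * Fmap hle c i
        = if (c (qmap hle i)).1 = rmap ν₀ i then (1:ℂ) else 0 := by
      intro c
      simp only [Fmap]
      by_cases h : rmap ν₀ i = (c (qmap hle i)).1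
      · rw [if_pos h, if_pos h.symm, sgn_mul_self]
      · rw [if_neg h, if_neg fun hh => h hh.symm, mul_zero]
    simp_rw [hterm]
    rw [Finset.sum_boole, ← Fintype.card_subtype, card_constraint]
  · rw [if_neg hik]
    by_cases hq : qmap hle i = qmap hle k
    · have hr : rmap ν₀ i ≠ rmap ν₀ k := fun hr => hik (eq_of_qr hle hq hr)
      apply Finset.sum_eq_zero
      intro c _
      simp only [Fmap, hq]
      by_cases h1 : rmap ν₀ i = (c (qmap hle k)).1
      · rw [if_pos h1, if_neg (fun h2 => hr (h1.trans h2.symm)), mul_zero]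
      · rw [if_neg h1, zero_mul]
    · set σf : Cfg d j ν₀ → Cfg d j ν₀ :=
        fun c => Function.update c (qmap hle k) ((c (qmap hle k)).1, !(c (qmap hle k)).2)
        with hσ
      have hinv : Function.Involutive σf := by
        intro c
        funext m
        by_cases h : m = qmap hle k
        · subst h; simp [σf, Function.update_self]
        · simp [σf, Function.update_of_ne h]
      have hterm : ∀ c, Fmap hle (σf c) i * Fmap hle (σf c) k
          = -(Fmap hle c i * Fmap hle c k) := by
        intro c
        have h1 : Fmap hle (σf c) i = Fmap hle c i := by
          simp only [Fmap, σf, Function.update_of_ne hq]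
        have h2 : Fmap hle (σf c) k = -Fmap hle c k := by
          simp only [Fmap, σf, Function.update_self]
          by_cases h : rmap ν₀ k = (c (qmap hle k)).1
          · rw [if_pos h, if_pos h, sgn_not]
          · rw [if_neg h, if_neg h, neg_zero]
        rw [h1, h2]; ring
      have hcomp := Equiv.sum_comp hinv.toPerm
        (fun c => Fmap hle c i * Fmap hle c k)
      have hneg : (∑ c : Cfg d j ν₀, Fmap hle c i * Fmap hle c k)
          = -(∑ c : Cfg d j ν₀, Fmap hle c i * Fmap hle c k) := by
        conv_lhs => rw [← hcomp]
        simp only [Function.Involutive.coe_toPerm]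
        rw [← Finset.sum_neg_distrib]
        exact Finset.sum_congr rfl fun c _ => hterm c
      have h2 : (2 : ℂ) * (∑ c : Cfg d j ν₀, Fmap hle c i * Fmap hle c k) = 0 := by
        rw [two_mul]
        nth_rewrite 1 [hneg]
        ring
      have := mul_eq_zero.mp h2
      simpa using this

lemma main_sum (hle : ν₀ ≤ j) (lam : MorreyIdx d j → ℂ) (k : MorreyIdx d j) :
    (∑ᶠ ε ∈ {ε : MorreyIdx d j → ℂ | memE d j ν₀ ε}, (∑ i, ε i * lam i) * ε k)
      = (alpha0 d j ν₀ : ℂ) * lam k := by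
  classical
  rw [range_Fmap hle, finsum_mem_range (Fmap_inj hle), finsum_eq_sum_of_fintype]
  calc (∑ c : Cfg d j ν₀, (∑ i, Fmap hle c i * lam i) * Fmap hle c k)
      = ∑ c : Cfg d j ν₀, ∑ i, (Fmap hle c i * Fmap hle c k) * lam i := by
        refine Finset.sum_congr rfl fun c _ => ?_
        rw [Finset.sum_mul]
        exact Finset.sum_congr rfl fun i _ => by ring
    _ = ∑ i, (∑ c : Cfg d j ν₀, Fmap hle c i * Fmap hle c k) * lam i := by
        rw [Finset.sum_comm]
        exact Finset.sum_congr rfl fun i _ => (Finset.sum_mul _ _ _).symm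
    _ = (alpha0 d j ν₀ : ℂ) * lam k := by
        simp_rw [key_sum hle]
        simp [Finset.sum_ite_eq']

lemma alpha0_pos : 0 < alpha0 d j ν₀ := by
  apply Nat.mul_pos two_pos
  exact Nat.pow_pos (by positivity)

end Stmt17

/-- (a) the number of `ε ∈ ℰ` with `ε_k ≠ 0` is a number `α₀` independent
of `k ∈ 𝒦_j`, and `|ℰ| = α₀ · 2^{ν₀ d}`; (b) `∑_{ε ∈ ℰ} (∑_i ε_i λ_i) ε_k = α₀ λ_k`
for all `λ` and `k`; in particular the identity on `ℂ^{𝒦_j}` equals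
`(2^{ν₀ d}/|ℰ|) ∑_{ε ∈ ℰ} ε ⊗ ε`. -/
theorem stmt17 (d : ℕ) (hd : 0 < d) (j ν₀ : ℕ) (hj : 1 ≤ j) (hν₀ : 1 ≤ ν₀)
    (hle : ν₀ ≤ j) :
    ∃ α₀ : ℕ,
      (∀ k : MorreyIdx d j,
        Set.ncard {ε : MorreyIdx d j → ℂ | memE d j ν₀ ε ∧ ε k ≠ 0} = α₀) ∧
      Set.ncard {ε : MorreyIdx d j → ℂ | memE d j ν₀ ε} = α₀ * 2 ^ (ν₀ * d) ∧
      (∀ (lam : MorreyIdx d j → ℂ) (k : MorreyIdx d j),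
        (∑ᶠ ε ∈ {ε : MorreyIdx d j → ℂ | memE d j ν₀ ε}, (∑ i, ε i * lam i) * ε k)
          = (α₀ : ℂ) * lam k) ∧
      (∀ (lam : MorreyIdx d j → ℂ) (k : MorreyIdx d j),
        ((2 : ℂ) ^ (ν₀ * d) /
            (Set.ncard {ε : MorreyIdx d j → ℂ | memE d j ν₀ ε} : ℂ)) *
          ∑ᶠ ε ∈ {ε : MorreyIdx d j → ℂ | memE d j ν₀ ε}, (∑ i, ε i * lam i) * ε k
            = lam k) := by
  refine ⟨Stmt17.alpha0 d j ν₀, fun k => Stmt17.ncard_ne_zero hle k, Stmt17.ncard_memE hle,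
    fun lam k => Stmt17.main_sum hle lam k, fun lam k => ?_⟩
  rw [Stmt17.main_sum hle lam k, Stmt17.ncard_memE hle]
  have hα : ((Stmt17.alpha0 d j ν₀ : ℕ) : ℂ) ≠ 0 :=
    Nat.cast_ne_zero.mpr Stmt17.alpha0_pos.ne'
  have h2 : (2:ℂ) ^ (ν₀ * d) ≠ 0 := pow_ne_zero _ two_ne_zero
  push_cast
  field_simp
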